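/- arXiv:1302.0988 — 4 statements merged into one kernel-verified Lean document; each statement's English description precedes it below -/
import Mathlib

section
/- Let a, b ∈ (0,1] with a ≤ b. Then the function g : [0,1] → ℝ defined by g(s) = (s·a + (1−s²)·b)/(s²·a + (1−s²)·b) satisfies 1 ≤ g(s) ≤ 5/4 for all s ∈ [0,1]. -/
theorem stmt0 (a b : ℝ) (ha : 0 < a) (hab : a ≤ b) (hb : b ≤ 1)
    (g : ℝ → ℝ)
    (hg : ∀ s, g s = (s * a + (1 - s ^ 2) * b) / (s ^ 2 * a + (1 - s ^ 2) * b)) :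
    ∀ s ∈ Set.Icc (0 : ℝ) 1, 1 ≤ g s ∧ g s ≤ 5 / 4 := by
  intro s hs
  obtain ⟨h0, h1⟩ := hs
  have hs2 : (1 - s ^ 2) ≥ 0 := by nlinarith
  have hD : 0 < s ^ 2 * a + (1 - s ^ 2) * b := by nlinarith
  rw [hg]
  constructor
  · rw [le_div_iff₀ hD]
    nlinarith [mul_nonneg (mul_nonneg h0 (sub_nonneg.2 h1)) ha.le]
  · rw [div_le_iff₀ hD]
    nlinarith [sq_nonneg (2*s - 1), mul_nonneg (sub_nonneg.2 hab) (mul_nonneg h0 (sub_nonneg.2 h1)), sq_nonneg (2*s-1), mul_nonneg (sub_nonneg.2 hab) (sq_nonneg (2*s-1))]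
end

section
/- The maximum over s ∈ [0,1] of g(s) = (s·a + (1−s²)·b)/(s²·a + (1−s²)·b), for 0 < a ≤ b ≤ 1, is attained at s = √b/(√b + √a), and the maximum value equals 1 + a/(2√b(√a + √b)). -/
theorem stmt1 (a b : ℝ) (ha : 0 < a) (hab : a ≤ b) (hb : b ≤ 1)
    (g : ℝ → ℝ)
    (hg : ∀ s, g s = (s * a + (1 - s ^ 2) * b) / (s ^ 2 * a + (1 - s ^ 2) * b)) :
    Real.sqrt b / (Real.sqrt b + Real.sqrt a) ∈ Set.Icc (0 : ℝ) 1 ∧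
    IsMaxOn g (Set.Icc (0 : ℝ) 1) (Real.sqrt b / (Real.sqrt b + Real.sqrt a)) ∧
    g (Real.sqrt b / (Real.sqrt b + Real.sqrt a)) =
      1 + a / (2 * Real.sqrt b * (Real.sqrt a + Real.sqrt b)) := by
  have hb0 : 0 < b := lt_of_lt_of_le ha hab
  set p := Real.sqrt a with hpdef
  set q := Real.sqrt b with hqdef
  have hp0 : 0 < p := Real.sqrt_pos.2 ha
  have hq0 : 0 < q := Real.sqrt_pos.2 hb0
  have hpa : p ^ 2 = a := Real.sq_sqrt ha.le
  have hqb : q ^ 2 = b := Real.sq_sqrt hb0.le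
  have hqp : 0 < q + p := by linarith
  have hDpos : ∀ s ∈ Set.Icc (0 : ℝ) 1, 0 < s ^ 2 * a + (1 - s ^ 2) * b := by
    intro s hs
    have h1 : (0:ℝ) ≤ 1 - s ^ 2 := by nlinarith [hs.1, hs.2]
    have h2 : (0:ℝ) ≤ (1 - s ^ 2) * (b - a) := mul_nonneg h1 (by linarith)
    nlinarith
  have hmem : q / (q + p) ∈ Set.Icc (0 : ℝ) 1 := by
    constructor
    · positivity
    · rw [div_le_one hqp]; linarith
  have hval : g (q / (q + p)) = 1 + a / (2 * q * (p + q)) := by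
    rw [hg]
    have hD := hDpos _ hmem
    have hDne : (q / (q + p)) ^ 2 * a + (1 - (q / (q + p)) ^ 2) * b ≠ 0 := ne_of_gt hD
    have hposne : (2 * q * (p + q)) ≠ 0 := by positivity
    have h1 : (q / (q + p)) * (q + p) = q := div_mul_cancel₀ _ hqp.ne'
    rw [← hpa, ← hqb] at hDne ⊢
    rw [show (1:ℝ) + p ^ 2 / (2 * q * (p + q)) = (2 * q * (p + q) + p ^ 2) / (2 * q * (p + q))
      from by field_simp, div_eq_div_iff hDne hposne]
    set t := q / (q + p) with htdef
    clear_value t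
    linear_combination (-(p ^ 2) * ((p + q) * t - q)) * h1
  refine ⟨hmem, ?_, hval⟩
  intro s hs
  simp only [Set.mem_setOf_eq]
  rw [hval, hg]
  have hD := hDpos s hs
  have hpos : (0:ℝ) < 2 * q * (p + q) := by positivity
  have hrw : 1 + a / (2 * q * (p + q)) = (2 * q * (p + q) + a) / (2 * q * (p + q)) := by
    field_simp
  rw [hrw, div_le_div_iff₀ hD hpos]
  rw [← hpa, ← hqb] at *
  nlinarith [mul_nonneg (sq_nonneg p) (sq_nonneg ((p + q) * s - q)), hD, hs.1, hs.2]
end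

section
/- A 3×3 symmetric real matrix R lies in the open set M₃ = int{Σᵢ aᵢ(Id − bᵢ⊗bᵢ) : aᵢ > 0, bᵢ ∈ S², m ∈ ℕ} if and only if (tr R / 2)·Id − R is positive definite. -/
open Matrix RealInnerProductSpace

local notation "𝕄" => Matrix (Fin 3) (Fin 3) ℝ

/-- sum of matrices mulVec -/
lemma sumMulVec {ι : Type*} (s : Finset ι) (f : ι → 𝕄) (x : Fin 3 → ℝ) :
    (∑ i ∈ s, f i) *ᵥ x = ∑ i ∈ s, f i *ᵥ x := by
  ext j
  simp only [mulVec, dotProduct, Matrix.sum_apply, Finset.sum_apply, Finset.sum_mul]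
  exact Finset.sum_comm

lemma dot_vecMulVec (b x : Fin 3 → ℝ) : x ⬝ᵥ (vecMulVec b b *ᵥ x) = (b ⬝ᵥ x) ^ 2 := by
  simp [dotProduct, mulVec, vecMulVec_apply, Fin.sum_univ_three]
  ring

lemma mul_diag_mul_transpose (U : 𝕄) (d : Fin 3 → ℝ) :
    U * diagonal d * Uᵀ = ∑ i, d i • vecMulVec (fun j => U j i) (fun j => U j i) := by
  ext j k
  simp only [Matrix.mul_apply, Matrix.mul_diagonal, Matrix.sum_apply, Matrix.smul_apply,
    vecMulVec_apply, transpose_apply, smul_eq_mul, Matrix.diagonal_apply]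
  simp only [mul_ite, mul_zero, Finset.sum_ite_eq', Finset.mem_univ, if_true]
  exact Finset.sum_congr rfl fun i _ => by ring

lemma isHermitian_of_isSymm {A : 𝕄} (h : A.IsSymm) : A.IsHermitian := by
  unfold Matrix.IsHermitian
  rw [conjTranspose_eq_transpose_of_trivial]
  exact h

/-- Spectral decomposition packaged for 3×3 real symmetric matrices. -/
lemma spectral_package (S : 𝕄) (hS : S.IsHermitian) :
    ∃ (c : Fin 3 → ℝ) (v : Fin 3 → Fin 3 → ℝ),
      (∀ i, ∑ j, v i j ^ 2 = 1) ∧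
      S = ∑ i, c i • vecMulVec (v i) (v i) ∧
      (∑ i, vecMulVec (v i) (v i)) = 1 ∧
      (∑ i, c i) = S.trace ∧
      (S.PosDef → ∀ i, 0 < c i) := by
  classical
  set U : 𝕄 := (hS.eigenvectorUnitary : 𝕄) with hU
  have hUmem := hS.eigenvectorUnitary.2
  have hstar : star U = Uᵀ := by
    rw [Matrix.star_eq_conjTranspose, conjTranspose_eq_transpose_of_trivial]
  have hUU : U * Uᵀ = 1 := by
    rw [← hstar]; exact (Matrix.mem_unitaryGroup_iff).mp hUmem
  have hUU' : Uᵀ * U = 1 := by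
    rw [← hstar]; exact (Matrix.mem_unitaryGroup_iff').mp hUmem
  refine ⟨hS.eigenvalues, fun i j => U j i, ?_, ?_, ?_, ?_, ?_⟩
  · intro i
    have h1 : ‖hS.eigenvectorBasis i‖ = 1 := hS.eigenvectorBasis.orthonormal.1 i
    have h2 : (inner ℝ (hS.eigenvectorBasis i) (hS.eigenvectorBasis i) : ℝ) = 1 := by
      rw [real_inner_self_eq_norm_sq, h1]; norm_num
    rw [← h2, PiLp.inner_apply]
    exact Finset.sum_congr rfl fun j _ => by
      simp [hU, RCLike.inner_apply, sq]
  · have := hS.spectral_theorem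
    rw [RCLike.ofReal_real_eq_id] at this
    simpa [← hU, hstar, mul_diag_mul_transpose] using this
  · have := mul_diag_mul_transpose U (fun _ => 1)
    simp only [one_smul] at this
    rw [← this, Matrix.diagonal_one, Matrix.mul_one, hUU]
  · -- trace
    have h := hS.spectral_theorem
    rw [RCLike.ofReal_real_eq_id] at h
    have : S.trace = (diagonal hS.eigenvalues).trace := by
      conv_lhs => rw [h]
      rw [Unitary.conjStarAlgAut_apply, ← hU, Matrix.trace_mul_cycle, hstar, hUU', Matrix.one_mul]
      simp
    rw [this, Matrix.trace_diagonal]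
  · intro hPD i
    exact hPD.eigenvalues_pos i

/-- The linear map `T`. -/
noncomputable def Tm (A : 𝕄) : 𝕄 := (A.trace / 2) • (1 : 𝕄) - A

lemma trace_vecMulVec (b : Fin 3 → ℝ) : (vecMulVec b b).trace = ∑ j, b j ^ 2 := by
  simp [Matrix.trace, Matrix.diag, vecMulVec_apply, sq]

lemma Tm_add (A B : 𝕄) : Tm (A + B) = Tm A + Tm B := by
  unfold Tm
  rw [Matrix.trace_add]
  ext i j
  simp only [Matrix.sub_apply, Matrix.add_apply, Matrix.smul_apply, Matrix.one_apply, smul_eq_mul]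
  by_cases h : i = j <;> simp [h] <;> ring

lemma Tm_sum (m : ℕ) (c : Fin m → ℝ) (b : Fin m → (Fin 3 → ℝ))
    (hb : ∀ i, ∑ j, (b i j) ^ 2 = 1) :
    Tm (∑ i, c i • ((1 : 𝕄) - vecMulVec (b i) (b i))) = ∑ i, c i • vecMulVec (b i) (b i) := by
  unfold Tm
  have htr : (∑ i, c i • ((1 : 𝕄) - vecMulVec (b i) (b i))).trace = 2 * ∑ i, c i := by
    rw [Matrix.trace_sum]
    rw [Finset.mul_sum]
    refine Finset.sum_congr rfl fun i _ => ?_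
    rw [Matrix.trace_smul, Matrix.trace_sub, Matrix.trace_one, trace_vecMulVec, hb i]
    simp
    ring
  rw [htr]
  have hsplit : ∑ i, c i • ((1 : 𝕄) - vecMulVec (b i) (b i))
      = (∑ i, c i) • (1 : 𝕄) - ∑ i, c i • vecMulVec (b i) (b i) := by
    rw [Finset.sum_smul]
    rw [← Finset.sum_sub_distrib]
    exact Finset.sum_congr rfl fun i _ => by rw [smul_sub]
  rw [hsplit]
  have : (2 * ∑ i, c i) / 2 = ∑ i, c i := by ring
  rw [this]
  abel

lemma posSemidef_sum_vecMulVec (m : ℕ) (c : Fin m → ℝ) (b : Fin m → (Fin 3 → ℝ))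
    (hc : ∀ i, 0 ≤ c i) : (∑ i, c i • vecMulVec (b i) (b i)).PosSemidef := by
  rw [posSemidef_iff_dotProduct_mulVec]
  constructor
  · unfold Matrix.IsHermitian
    ext j k
    simp only [conjTranspose_apply, Matrix.sum_apply, Matrix.smul_apply, vecMulVec_apply,
      smul_eq_mul, star_trivial]
    exact Finset.sum_congr rfl fun i _ => by ring
  · intro x
    simp only [star_trivial]
    rw [sumMulVec]
    have : x ⬝ᵥ ∑ i, (c i • vecMulVec (b i) (b i)) *ᵥ x
        = ∑ i, c i * (b i ⬝ᵥ x) ^ 2 := by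
      simp only [dotProduct, Finset.sum_apply, Finset.mul_sum]
      rw [Finset.sum_comm]
      refine Finset.sum_congr rfl fun i _ => ?_
      have := dot_vecMulVec (b i) x
      calc ∑ j, x j * ((c i • vecMulVec (b i) (b i)) *ᵥ x) j
          = c i * ∑ j, x j * (vecMulVec (b i) (b i) *ᵥ x) j := by
            rw [Finset.mul_sum]
            refine Finset.sum_congr rfl fun j _ => ?_
            rw [smul_mulVec]
            simp [mul_comm, mul_left_comm]
        _ = c i * (b i ⬝ᵥ x) ^ 2 := by
            rw [← this]; rfl
    rw [this]
    exact Finset.sum_nonneg fun i _ => mul_nonneg (hc i) (sq_nonneg _)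


/-- The cone generated by matrices `Id - b ⊗ b` with `b` in the unit sphere `S²`. -/
def coneM3 : Set (Matrix (Fin 3) (Fin 3) ℝ) :=
  {S | ∃ (m : ℕ) (c : Fin m → ℝ) (b : Fin m → (Fin 3 → ℝ)),
    (∀ i, 0 < c i) ∧ (∀ i, ∑ j, (b i j) ^ 2 = 1) ∧
    S = ∑ i, c i • ((1 : Matrix (Fin 3) (Fin 3) ℝ) - Matrix.vecMulVec (b i) (b i))}

/-- `M₃` : the interior, within the space of symmetric 3×3 matrices, of the cone `coneM3`. -/
def M3 : Set {A : Matrix (Fin 3) (Fin 3) ℝ // A.IsSymm} :=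
  interior (Subtype.val ⁻¹' coneM3)

/-- If `Tm A` is positive definite then `A` is in the cone. -/
lemma mem_cone_of_posDef {A : 𝕄} (h : (Tm A).PosDef) : A ∈ coneM3 := by
  obtain ⟨c, v, hv1, hdec, hsum1, htr, hpos⟩ := spectral_package (Tm A) h.isHermitian
  refine ⟨3, c, v, hpos h, hv1, ?_⟩
  have hsplit : ∑ i, c i • ((1 : 𝕄) - vecMulVec (v i) (v i))
      = (∑ i, c i) • (1 : 𝕄) - ∑ i, c i • vecMulVec (v i) (v i) := by
    rw [Finset.sum_smul, ← Finset.sum_sub_distrib]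
    exact Finset.sum_congr rfl fun i _ => by rw [smul_sub]
  rw [hsplit, ← hdec, htr]
  have htrTm : (Tm A).trace = A.trace / 2 := by
    unfold Tm
    rw [Matrix.trace_sub, Matrix.trace_smul, Matrix.trace_one]
    simp
    ring
  rw [htrTm]
  unfold Tm
  abel

/-- quadratic lower bound -/
lemma quad_lower (c : Fin 3 → ℝ) (v : Fin 3 → Fin 3 → ℝ) (μ : ℝ)
    (h1 : (∑ i, vecMulVec (v i) (v i)) = 1) (hμ : ∀ i, μ ≤ c i) (x : Fin 3 → ℝ) :
    μ * (x ⬝ᵥ x) ≤ x ⬝ᵥ ((∑ i, c i • vecMulVec (v i) (v i)) *ᵥ x) := by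
  have key : ∀ (d : Fin 3 → ℝ), x ⬝ᵥ ((∑ i, d i • vecMulVec (v i) (v i)) *ᵥ x)
      = ∑ i, d i * (v i ⬝ᵥ x) ^ 2 := by
    intro d
    rw [sumMulVec]
    simp only [dotProduct, Finset.sum_apply, Finset.mul_sum]
    rw [Finset.sum_comm]
    refine Finset.sum_congr rfl fun i _ => ?_
    calc ∑ j, x j * ((d i • vecMulVec (v i) (v i)) *ᵥ x) j
        = d i * ∑ j, x j * (vecMulVec (v i) (v i) *ᵥ x) j := by
          rw [Finset.mul_sum]
          refine Finset.sum_congr rfl fun j _ => ?_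
          rw [smul_mulVec]
          simp [mul_comm, mul_left_comm]
      _ = d i * (v i ⬝ᵥ x) ^ 2 := by rw [← dot_vecMulVec (v i) x]; rfl
  have hx1 : x ⬝ᵥ x = ∑ i, (v i ⬝ᵥ x) ^ 2 := by
    have := key (fun _ => 1)
    simp only [one_smul, one_mul] at this
    rw [← this, h1, Matrix.one_mulVec]
  rw [key, hx1, Finset.mul_sum]
  exact Finset.sum_le_sum fun i _ => mul_le_mul_of_nonneg_right (hμ i) (sq_nonneg _)

lemma pert_scalar (e00 e01 e02 e10 e11 e12 e20 e21 e22 δ x0 x1 x2 : ℝ)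
    (h00 : -δ ≤ e00 ∧ e00 ≤ δ) (h01 : -δ ≤ e01 ∧ e01 ≤ δ) (h02 : -δ ≤ e02 ∧ e02 ≤ δ)
    (h10 : -δ ≤ e10 ∧ e10 ≤ δ) (h11 : -δ ≤ e11 ∧ e11 ≤ δ) (h12 : -δ ≤ e12 ∧ e12 ≤ δ)
    (h20 : -δ ≤ e20 ∧ e20 ≤ δ) (h21 : -δ ≤ e21 ∧ e21 ≤ δ) (h22 : -δ ≤ e22 ∧ e22 ≤ δ) :
    -(9/2*δ) * (x0*x0+x1*x1+x2*x2) ≤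
      (e00+e11+e22)/2 * (x0*x0+x1*x1+x2*x2)
      - (x0*(e00*x0+e01*x1+e02*x2) + x1*(e10*x0+e11*x1+e12*x2) + x2*(e20*x0+e21*x1+e22*x2)) := by
  linarith [mul_nonneg (by linarith [h01.2] : (0:ℝ) ≤ δ - e01) (sq_nonneg (x0+x1)),
    mul_nonneg (by linarith [h01.1] : (0:ℝ) ≤ δ + e01) (sq_nonneg (x0-x1)),
    mul_nonneg (by linarith [h10.2] : (0:ℝ) ≤ δ - e10) (sq_nonneg (x0+x1)),
    mul_nonneg (by linarith [h10.1] : (0:ℝ) ≤ δ + e10) (sq_nonneg (x0-x1)),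
    mul_nonneg (by linarith [h02.2] : (0:ℝ) ≤ δ - e02) (sq_nonneg (x0+x2)),
    mul_nonneg (by linarith [h02.1] : (0:ℝ) ≤ δ + e02) (sq_nonneg (x0-x2)),
    mul_nonneg (by linarith [h20.2] : (0:ℝ) ≤ δ - e20) (sq_nonneg (x0+x2)),
    mul_nonneg (by linarith [h20.1] : (0:ℝ) ≤ δ + e20) (sq_nonneg (x0-x2)),
    mul_nonneg (by linarith [h12.2] : (0:ℝ) ≤ δ - e12) (sq_nonneg (x1+x2)),
    mul_nonneg (by linarith [h12.1] : (0:ℝ) ≤ δ + e12) (sq_nonneg (x1-x2)),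
    mul_nonneg (by linarith [h21.2] : (0:ℝ) ≤ δ - e21) (sq_nonneg (x1+x2)),
    mul_nonneg (by linarith [h21.1] : (0:ℝ) ≤ δ + e21) (sq_nonneg (x1-x2)),
    mul_nonneg (by linarith [h00.2] : (0:ℝ) ≤ δ - e00) (sq_nonneg x0),
    mul_nonneg (by linarith [h11.2] : (0:ℝ) ≤ δ - e11) (sq_nonneg x1),
    mul_nonneg (by linarith [h22.2] : (0:ℝ) ≤ δ - e22) (sq_nonneg x2),
    mul_nonneg (by linarith [h00.1] : (0:ℝ) ≤ δ + e00) (sq_nonneg x0),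
    mul_nonneg (by linarith [h00.1] : (0:ℝ) ≤ δ + e00) (sq_nonneg x1),
    mul_nonneg (by linarith [h00.1] : (0:ℝ) ≤ δ + e00) (sq_nonneg x2),
    mul_nonneg (by linarith [h11.1] : (0:ℝ) ≤ δ + e11) (sq_nonneg x0),
    mul_nonneg (by linarith [h11.1] : (0:ℝ) ≤ δ + e11) (sq_nonneg x1),
    mul_nonneg (by linarith [h11.1] : (0:ℝ) ≤ δ + e11) (sq_nonneg x2),
    mul_nonneg (by linarith [h22.1] : (0:ℝ) ≤ δ + e22) (sq_nonneg x0),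
    mul_nonneg (by linarith [h22.1] : (0:ℝ) ≤ δ + e22) (sq_nonneg x1),
    mul_nonneg (by linarith [h22.1] : (0:ℝ) ≤ δ + e22) (sq_nonneg x2)]

/-- perturbation bound -/
lemma pert_bound (E : 𝕄) (δ : ℝ) (hδ : 0 ≤ δ) (hE : ∀ j k, |E j k| ≤ δ) (x : Fin 3 → ℝ) :
    -(9 / 2 * δ) * (x ⬝ᵥ x) ≤ x ⬝ᵥ (Tm E *ᵥ x) := by
  have h := fun j k => abs_le.mp (hE j k)
  have key := pert_scalar (E 0 0) (E 0 1) (E 0 2) (E 1 0) (E 1 1) (E 1 2)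
    (E 2 0) (E 2 1) (E 2 2) δ (x 0) (x 1) (x 2)
    (h 0 0) (h 0 1) (h 0 2) (h 1 0) (h 1 1) (h 1 2) (h 2 0) (h 2 1) (h 2 2)
  unfold Tm
  simp only [dotProduct, mulVec, Matrix.sub_apply, Matrix.smul_apply, Matrix.one_apply,
    smul_eq_mul, Matrix.trace, Matrix.diag, Fin.sum_univ_three]
  norm_num [Fin.ext_iff]
  linarith [key]

lemma Tm_smul_one (ε : ℝ) : Tm (ε • (1:𝕄)) = (ε/2) • (1:𝕄) := by
  unfold Tm
  rw [Matrix.trace_smul, Matrix.trace_one]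
  ext i j
  simp only [Matrix.sub_apply, Matrix.smul_apply, Matrix.one_apply, smul_eq_mul]
  by_cases h : i = j <;> simp [h] <;> ring

theorem stmt4 (R : {A : Matrix (Fin 3) (Fin 3) ℝ // A.IsSymm}) :
    R ∈ M3 ↔ ((R.1.trace / 2) • (1 : Matrix (Fin 3) (Fin 3) ℝ) - R.1).PosDef := by
  have hgoal : ((R.1.trace / 2) • (1 : Matrix (Fin 3) (Fin 3) ℝ) - R.1) = Tm R.1 := rfl
  rw [hgoal]
  constructor
  · intro hR
    have hnhds : (Subtype.val ⁻¹' coneM3 : Set {A : 𝕄 // A.IsSymm}) ∈ nhds R :=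
      mem_interior_iff_mem_nhds.mp hR
    have hsymm : ∀ ε : ℝ, (R.1 - ε • (1:𝕄)).IsSymm := by
      intro ε
      unfold Matrix.IsSymm
      rw [transpose_sub, transpose_smul, transpose_one, R.2]
    have hcont : Continuous (fun ε : ℝ => (⟨R.1 - ε • 1, hsymm ε⟩ : {A : 𝕄 // A.IsSymm})) := by
      apply Continuous.subtype_mk
      exact continuous_const.sub (continuous_id.smul continuous_const)
    have hf0 : (⟨R.1 - (0:ℝ) • 1, hsymm 0⟩ : {A : 𝕄 // A.IsSymm}) = R := by
      apply Subtype.ext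
      simp
    have htend : Filter.Tendsto (fun ε : ℝ => (⟨R.1 - ε • 1, hsymm ε⟩ : {A : 𝕄 // A.IsSymm}))
        (nhds 0) (nhds R) := by
      have := hcont.tendsto 0
      rwa [hf0] at this
    have hev : ∀ᶠ ε in nhdsWithin 0 (Set.Ioi (0:ℝ)),
        (⟨R.1 - ε • 1, hsymm ε⟩ : {A : 𝕄 // A.IsSymm}) ∈ Subtype.val ⁻¹' coneM3
          ∧ ε ∈ Set.Ioi (0:ℝ) :=
      ((htend.eventually hnhds).filter_mono nhdsWithin_le_nhds).and eventually_mem_nhdsWithin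
    obtain ⟨ε, hmem, hε⟩ := hev.exists
    obtain ⟨m, c, b, hc, hb, heq⟩ := hmem
    have heq' : R.1 - ε • (1:𝕄) = ∑ i, c i • ((1 : 𝕄) - vecMulVec (b i) (b i)) := heq
    have hPSD : (Tm (R.1 - ε • 1)).PosSemidef := by
      rw [heq', Tm_sum m c b hb]
      exact posSemidef_sum_vecMulVec m c b fun i => (hc i).le
    have hPD : ((ε/2) • (1:𝕄)).PosDef := by
      rw [Matrix.smul_one_eq_diagonal]
      exact Matrix.PosDef.diagonal fun _ => by
        have : (0:ℝ) < ε := hε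
        positivity
    have hiden : Tm R.1 = Tm (R.1 - ε • 1) + (ε/2) • (1:𝕄) := by
      rw [← Tm_smul_one, ← Tm_add, sub_add_cancel]
    rw [hiden]
    exact Matrix.PosDef.posSemidef_add hPSD hPD
  · intro h
    obtain ⟨c, v, hv1, hdec, hsum1, htr, hposc⟩ := spectral_package (Tm R.1) h.isHermitian
    have hcpos : ∀ i, 0 < c i := hposc h
    set μ : ℝ := min (min (c 0) (c 1)) (c 2) with hμ
    have hμpos : 0 < μ := lt_min (lt_min (hcpos 0) (hcpos 1)) (hcpos 2)
    have hμle : ∀ i, μ ≤ c i := by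
      intro i
      fin_cases i
      · exact (min_le_left _ _).trans (min_le_left _ _)
      · exact (min_le_left _ _).trans (min_le_right _ _)
      · exact min_le_right _ _
    set δ : ℝ := μ / 5 with hδdef
    have hδpos : 0 < δ := by positivity
    set W : Set 𝕄 := ⋂ j, ⋂ k, (fun M : 𝕄 => M j k) ⁻¹' Metric.ball (R.1 j k) δ with hW
    have hWopen : IsOpen W := by
      refine isOpen_iInter_of_finite fun j => isOpen_iInter_of_finite fun k => ?_
      exact Metric.isOpen_ball.preimage (continuous_id.matrix_elem j k)
    apply mem_interior.mpr
    refine ⟨Subtype.val ⁻¹' W, ?_, hWopen.preimage continuous_subtype_val, ?_⟩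
    · intro A hA
      have hE : ∀ j k, |A.1 j k - R.1 j k| ≤ δ := by
        intro j k
        have := Set.mem_iInter.mp (Set.mem_iInter.mp hA j) k
        rw [Set.mem_preimage, Metric.mem_ball, Real.dist_eq] at this
        exact this.le
      show A.1 ∈ coneM3
      apply mem_cone_of_posDef
      rw [posDef_iff_dotProduct_mulVec]
      constructor
      · apply isHermitian_of_isSymm
        unfold Matrix.IsSymm Tm
        rw [transpose_sub, transpose_smul, transpose_one, A.2]
      · intro x hx
        have hxx : 0 < x ⬝ᵥ x := by
          have := (dotProduct_star_self_pos_iff (v := x)).mpr hx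
          simpa using this
        have hTmA : Tm A.1 = Tm R.1 + Tm (A.1 - R.1) := by
          rw [← Tm_add, add_sub_cancel]
        have hlow : μ * (x ⬝ᵥ x) ≤ x ⬝ᵥ (Tm R.1 *ᵥ x) := by
          rw [hdec]
          exact quad_lower c v μ hsum1 hμle x
        have hpert : -(9 / 2 * δ) * (x ⬝ᵥ x) ≤ x ⬝ᵥ (Tm (A.1 - R.1) *ᵥ x) :=
          pert_bound _ δ hδpos.le (by simpa using hE) x
        have hcomb : x ⬝ᵥ (Tm A.1 *ᵥ x) = x ⬝ᵥ (Tm R.1 *ᵥ x) + x ⬝ᵥ (Tm (A.1 - R.1) *ᵥ x) := by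
          rw [hTmA, Matrix.add_mulVec, dotProduct_add]
        have hμx := mul_pos hμpos hxx
        simp only [star_trivial]
        rw [hcomb]
        rw [hδdef] at hpert
        nlinarith [hpert, hlow, hμx]
    · refine Set.mem_preimage.mpr (Set.mem_iInter.mpr fun j => Set.mem_iInter.mpr fun k => ?_)
      simp [Metric.mem_ball, hδpos]
end

section
/- With notation as in the Beltrami flow construction, the average of W⊗W over the torus equals Σ_{|k|=λ₀} |a_k|² (Id − (k/|k|)⊗(k/|k|)); that is, (1/(2π)³) ∫_{𝕋³} W⊗W dξ = Σ_{|k|=λ₀} |a_k|² (Id − (k/|k|)⊗(k/|k|)). -/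
open MeasureTheory

-- one dimensional integral
lemma oneDim (n : ℤ) : ∫ t in Set.Icc (0:ℝ) (2*Real.pi),
    Complex.exp (Complex.I * (n * t)) = if n = 0 then ((2*Real.pi : ℝ):ℂ) else 0 := by
  rw [integral_Icc_eq_integral_Ioc,
    ← intervalIntegral.integral_of_le (by positivity : (0:ℝ) ≤ 2*Real.pi)]
  by_cases h : n = 0
  · simp [h, Real.pi_pos.le]
  · simp only [h, if_false]
    have hc : (Complex.I * n) ≠ 0 := by
      simp [Complex.I_ne_zero, Complex.ext_iff, h]
    have := integral_exp_mul_complex (a := 0) (b := 2*Real.pi) hc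
    simp only [mul_assoc] at this
    rw [this]
    rw [show Complex.I * (↑n * ↑(2*Real.pi)) = n * (2*Real.pi*Complex.I) by push_cast; ring]
    rw [Complex.exp_int_mul_two_pi_mul_I]
    simp

lemma cube (n : Fin 3 → ℤ) : ∫ ξ in Set.Icc (0 : Fin 3 → ℝ) (fun _ => 2*Real.pi),
    Complex.exp (Complex.I * (∑ m, ((n m : ℝ):ℂ) * ((ξ m : ℝ):ℂ)))
    = if n = 0 then (((2*Real.pi)^3 : ℝ):ℂ) else 0 := by
  have key : ∫ ξ in Set.Icc (0 : Fin 3 → ℝ) (fun _ => 2*Real.pi),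
      Complex.exp (Complex.I * (∑ m, ((n m : ℝ):ℂ) * ((ξ m : ℝ):ℂ)))
      = ∏ m, ∫ t in Set.Icc (0:ℝ) (2*Real.pi), Complex.exp (Complex.I * (n m * t)) := by
    have hIcc : Set.Icc (0 : Fin 3 → ℝ) (fun _ => 2*Real.pi)
        = Set.pi Set.univ (fun _ : Fin 3 => Set.Icc (0:ℝ) (2*Real.pi)) := by
      rw [← Set.pi_univ_Icc]; rfl
    rw [hIcc]
    have hmeas : MeasurableSet (Set.pi Set.univ (fun _ : Fin 3 => Set.Icc (0:ℝ) (2*Real.pi))) :=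
      MeasurableSet.univ_pi (fun _ => measurableSet_Icc)
    rw [← integral_indicator hmeas]
    have : ∀ ξ : Fin 3 → ℝ,
        (Set.pi Set.univ (fun _ : Fin 3 => Set.Icc (0:ℝ) (2*Real.pi))).indicator
          (fun ξ => Complex.exp (Complex.I * (∑ m, ((n m : ℝ):ℂ) * ((ξ m : ℝ):ℂ)))) ξ
        = ∏ m, (Set.Icc (0:ℝ) (2*Real.pi)).indicator
            (fun t => Complex.exp (Complex.I * (n m * t))) (ξ m) := by
      intro ξ
      by_cases h : ξ ∈ Set.pi Set.univ (fun _ : Fin 3 => Set.Icc (0:ℝ) (2*Real.pi))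
      · rw [Set.indicator_of_mem h]
        rw [Finset.mul_sum, Complex.exp_sum]
        refine Finset.prod_congr rfl fun m _ => ?_
        rw [Set.indicator_of_mem (h m (Set.mem_univ m))]
        ring_nf
        rw [mul_right_comm]
        norm_cast
      · rw [Set.indicator_of_notMem h]
        rw [Set.mem_univ_pi] at h
        push_neg at h
        obtain ⟨m, hm⟩ := h
        exact (Finset.prod_eq_zero (Finset.mem_univ m)
          (by rw [Set.indicator_of_notMem hm])).symm
    simp_rw [this]
    rw [MeasureTheory.integral_fintype_prod_volume_eq_prod
      (f := fun m t => (Set.Icc (0:ℝ) (2*Real.pi)).indicator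
        (fun t => Complex.exp (Complex.I * (n m * t))) t)]
    refine Finset.prod_congr rfl fun m _ => ?_
    rw [integral_indicator measurableSet_Icc]
  rw [key]
  simp_rw [oneDim]
  by_cases h : n = 0
  · simp only [h, if_true, Pi.zero_apply, if_pos rfl]
    rw [Finset.prod_const]
    push_cast
    norm_num
  · simp only [h, if_false]
    have : ∃ m, n m ≠ 0 := by
      by_contra hc; push_neg at hc; exact h (funext hc)
    obtain ⟨m, hm⟩ := this
    exact Finset.prod_eq_zero (Finset.mem_univ m) (by simp [hm])

lemma crossEntry (a b : Fin 3 → ℝ) (i j : Fin 3) :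
    (crossProduct b a) i * (crossProduct b a) j =
      ((∑ m, a m ^ 2) * (∑ m, b m ^ 2) - (∑ m, a m * b m) ^ 2) * (if i = j then 1 else 0)
      - (∑ m, b m ^ 2) * (a i * a j) - (∑ m, a m ^ 2) * (b i * b j)
      + (∑ m, a m * b m) * (a i * b j + a j * b i) := by
  fin_cases i <;> fin_cases j <;> simp [cross_apply, Fin.sum_univ_three] <;> ring

lemma crossTensor (a b : Fin 3 → ℝ) (h1 : ∑ m, a m ^ 2 = 1)
    (h2 : ∑ m, b m ^ 2 = 1) (h3 : ∑ m, a m * b m = 0) (i j : Fin 3) :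
    a i * a j + (crossProduct b a) i * (crossProduct b a) j
      = (if i = j then 1 else 0) - b i * b j := by
  rw [crossEntry, h1, h2, h3]
  ring

lemma crossCast (x y : Fin 3 → ℝ) (j : Fin 3) :
    (crossProduct (fun m => ((x m : ℝ):ℂ)) (fun m => ((y m : ℝ):ℂ))) j
      = ((crossProduct x y) j : ℂ) := by
  fin_cases j <;> simp [cross_apply]

theorem stmt8 (lam : ℝ) (hlam : 1 ≤ lam)
    (K : Finset (Fin 3 → ℤ))
    (hK : ∀ k ∈ K, (∑ m, ((k m : ℝ)) ^ 2) = lam ^ 2)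
    (hKsym : ∀ k ∈ K, -k ∈ K)
    (A : (Fin 3 → ℤ) → (Fin 3 → ℝ))
    (hAk : ∀ k ∈ K, ∑ m, A k m * (k m : ℝ) = 0)
    (hAnorm : ∀ k ∈ K, ∑ m, (A k m) ^ 2 = 1)
    (hAsym : ∀ k ∈ K, A (-k) = A k)
    (a : (Fin 3 → ℤ) → ℂ)
    (ha : ∀ k ∈ K, a (-k) = starRingEnd ℂ (a k))
    (B : (Fin 3 → ℤ) → (Fin 3 → ℂ))
    (hB : ∀ k j, B k j = ((A k j : ℝ) : ℂ) +
      Complex.I * (crossProduct (fun m => (((k m : ℝ) / lam : ℝ) : ℂ))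
        (fun m => ((A k m : ℝ) : ℂ))) j)
    (W : (Fin 3 → ℝ) → (Fin 3 → ℂ))
    (hW : ∀ ξ j, W ξ j = ∑ k ∈ K,
      a k * B k j * Complex.exp (Complex.I * (∑ m, (k m : ℝ) * ξ m))) :
    ∀ i j : Fin 3,
      ((1 / (2 * Real.pi) ^ 3 : ℝ) : ℂ) *
          ∫ ξ in Set.Icc (0 : Fin 3 → ℝ) (fun _ => 2 * Real.pi), W ξ i * W ξ j =
        ∑ k ∈ K, ((‖a k‖ ^ 2 : ℝ) : ℂ) *
          ((if i = j then (1 : ℂ) else 0) -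
            ((k i : ℝ) : ℂ) * ((k j : ℝ) : ℂ) / ((lam : ℝ) : ℂ) ^ 2) := by
  intro i j
  classical
  have hlam0 : lam ≠ 0 := by linarith
  set Cv : (Fin 3 → ℤ) → Fin 3 → ℝ :=
    fun k => crossProduct (fun m => (k m : ℝ) / lam) (A k) with hCv
  -- B in terms of real quantities
  have hBk : ∀ k (j : Fin 3), B k j = ((A k j : ℝ) : ℂ) + Complex.I * ((Cv k j : ℝ) : ℂ) := by
    intro k j
    rw [hB]
    congr 1
    rw [crossCast (fun m => (k m : ℝ)/lam) (A k) j]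
  have hCneg : ∀ k (j : Fin 3), k ∈ K → Cv (-k) j = - Cv k j := by
    intro k j hk
    simp only [hCv, hAsym k hk]
    fin_cases j <;> simp [cross_apply] <;> push_cast <;> ring
  have hBneg : ∀ k ∈ K, ∀ (j : Fin 3),
      B (-k) j = ((A k j : ℝ) : ℂ) - Complex.I * ((Cv k j : ℝ) : ℂ) := by
    intro k hk j
    rw [hBk, hAsym k hk, hCneg k j hk]
    push_cast
    ring
  -- pointwise expansion of the integrand
  have hint : ∀ ξ : Fin 3 → ℝ, W ξ i * W ξ j =
      ∑ k ∈ K, ∑ l ∈ K, (a k * B k i * (a l * B l j)) *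
        Complex.exp (Complex.I * ∑ m, (((k + l) m : ℝ) : ℂ) * ((ξ m : ℝ) : ℂ)) := by
    intro ξ
    rw [hW ξ i, hW ξ j, Finset.sum_mul_sum]
    refine Finset.sum_congr rfl fun k _ => Finset.sum_congr rfl fun l _ => ?_
    rw [mul_mul_mul_comm, ← Complex.exp_add, ← mul_add]
    have hsum : ((∑ m, (k m : ℝ) * ξ m : ℝ) : ℂ) + ((∑ m, (l m : ℝ) * ξ m : ℝ) : ℂ)
        = ∑ m, (((k + l) m : ℝ) : ℂ) * ((ξ m : ℝ) : ℂ) := by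
      push_cast
      rw [← Finset.sum_add_distrib]
      refine Finset.sum_congr rfl fun m _ => ?_
      rw [Pi.add_apply]
      push_cast
      ring
    rw [hsum]
  -- integrability
  have hintg : ∀ (c : ℂ) (n : Fin 3 → ℤ),
      IntegrableOn (fun ξ : Fin 3 → ℝ =>
        c * Complex.exp (Complex.I * ∑ m, ((n m : ℝ) : ℂ) * ((ξ m : ℝ) : ℂ)))
        (Set.Icc (0 : Fin 3 → ℝ) (fun _ => 2 * Real.pi)) volume := by
    intro c n
    apply Continuous.integrableOn_Icc
    fun_prop
  -- compute the integral
  have hI : ∫ ξ in Set.Icc (0 : Fin 3 → ℝ) (fun _ => 2 * Real.pi), W ξ i * W ξ j =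
      ∑ k ∈ K, (a k * B k i * (a (-k) * B (-k) j)) * (((2*Real.pi)^3 : ℝ) : ℂ) := by
    simp_rw [hint]
    rw [integral_finset_sum _ (fun k _ => integrable_finset_sum _ (fun l _ => hintg _ _))]
    refine Finset.sum_congr rfl fun k hk => ?_
    rw [integral_finset_sum _ (fun l _ => hintg _ _)]
    have : ∀ l ∈ K, (∫ ξ in Set.Icc (0 : Fin 3 → ℝ) (fun _ => 2 * Real.pi),
        (a k * B k i * (a l * B l j)) *
          Complex.exp (Complex.I * ∑ m, (((k + l) m : ℝ) : ℂ) * ((ξ m : ℝ) : ℂ)))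
        = if l = -k then (a k * B k i * (a l * B l j)) * (((2*Real.pi)^3 : ℝ) : ℂ) else 0 := by
      intro l _
      rw [MeasureTheory.integral_const_mul, cube (k + l)]
      by_cases h : l = -k
      · rw [if_pos h, if_pos (by rw [h]; ring)]
      · rw [if_neg h, if_neg (by
          intro hc
          exact h (by rw [← neg_add_cancel_left k l, hc, add_zero]  ))]
        rw [mul_zero]
    rw [Finset.sum_congr rfl this, Finset.sum_ite_eq' K (-k)
      (fun l => (a k * B k i * (a l * B l j)) * (((2*Real.pi)^3 : ℝ) : ℂ)),
      if_pos (hKsym k hk)]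
  rw [hI, Finset.mul_sum]
  have hpi3 : (((2*Real.pi)^3 : ℝ) : ℂ) ≠ 0 := by
    simp only [ne_eq, Complex.ofReal_eq_zero]
    positivity
  have hstep : ∀ k ∈ K, ((1 / (2 * Real.pi) ^ 3 : ℝ) : ℂ) *
      ((a k * B k i * (a (-k) * B (-k) j)) * (((2*Real.pi)^3 : ℝ) : ℂ))
      = a k * B k i * (a (-k) * B (-k) j) := by
    intro k _
    have h1 : ((2*Real.pi)^3 : ℝ) * (1/(2*Real.pi)^3) = 1 := by
      have : (2*Real.pi) ≠ 0 := by positivity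
      field_simp
    rw [mul_comm (((1 / (2 * Real.pi) ^ 3 : ℝ) : ℂ)) _, mul_assoc, ← Complex.ofReal_mul, h1,
      Complex.ofReal_one, mul_one]
  rw [Finset.sum_congr rfl hstep]
  -- now the purely algebraic part
  rw [← sub_eq_zero, ← Finset.sum_sub_distrib]
  refine Finset.sum_involution (fun k _ => -k) ?_ ?_ (fun k hk => hKsym k hk)
    (fun k _ => neg_neg k)
  · -- pairing identity
    intro k hk
    have hk' : -k ∈ K := hKsym k hk
    have haa : a k * a (-k) = ((‖a k‖ ^ 2 : ℝ) : ℂ) := by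
      rw [ha k hk, Complex.mul_conj, Complex.sq_norm]
    have haa' : a (-k) * a k = ((‖a k‖ ^ 2 : ℝ) : ℂ) := by
      rw [mul_comm]; exact haa
    have habs : ‖a (-k)‖ = ‖a k‖ := by
      rw [ha k hk]; exact Complex.norm_conj _
    -- real tensor identity
    have hten : ∀ i' j' : Fin 3, A k i' * A k j' + Cv k i' * Cv k j'
        = (if i' = j' then 1 else 0) - ((k i' : ℝ)/lam) * ((k j' : ℝ)/lam) := by
      intro i' j'
      exact crossTensor (A k) (fun m => (k m : ℝ)/lam) (hAnorm k hk)
        (by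
          simp_rw [div_pow, ← Finset.sum_div, hK k hk]
          field_simp)
        (by
          simp_rw [mul_div_assoc']
          rw [← Finset.sum_div]
          rw [hAk k hk]
          simp) i' j'
    have hBB : B k i * B (-k) j + B (-k) i * B k j
        = 2 * (((A k i * A k j + Cv k i * Cv k j : ℝ)) : ℂ) := by
      rw [hBk k i, hBk k j, hBneg k hk i, hBneg k hk j]
      push_cast
      ring_nf
      rw [Complex.I_sq]
      ring
    have hnegk : ∀ m : Fin 3, ((-k) m : ℝ) = -(k m : ℝ) := by
      intro m; simp
    rw [neg_neg]
    have expand : a k * B k i * (a (-k) * B (-k) j) + a (-k) * B (-k) i * (a k * B k j)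
        = ((‖a k‖ ^ 2 : ℝ) : ℂ) * (B k i * B (-k) j + B (-k) i * B k j) := by
      linear_combination (B k i * B (-k) j + B (-k) i * B k j) * haa
    rw [sub_add_sub_comm, expand, hBB, hten i j, habs, hnegk i, hnegk j]
    push_cast [apply_ite Complex.ofReal]
    field_simp
    ring
  · -- g a ≠ a when nonzero
    intro k hk _
    intro hc
    have hkz : k = 0 := by
      funext m
      have h2 : -(k m) = k m := congrFun hc m
      show k m = 0
      omega
    have := hK k hk
    rw [hkz] at this
    simp at this
    nlinarith
end
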